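/- For every RBM instance, the optimal value of the 0-1 integer program IP (the minimum of z(x) over feasible 0-1 solutions x) equals the optimal cost of the reordering buffer management instance, namely the minimum, over all bijections σ : {1,…,n} → {k+1,…,k+n} satisfying σ(i) ≥ i for every item i, of the number of maximal monochromatic blocks of the output sequence σ⁻¹(k+1), σ⁻¹(k+2), …, σ⁻¹(k+n), where consecutive positions j and j+1 lie in the same block iff c(σ⁻¹(j)) = c(σ⁻¹(j+1)). -/

import Mathlib

open Finset

open scoped Classical in
/-- The next item of the same color as item `i`, or `k+n+2` if `i` is the last of its color. -/
noncomputable def nxt (k n : ℕ) (c : ℕ → ℕ) (i : ℕ) : ℕ :=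
  if h : ∃ i', (i < i' ∧ i' ≤ n) ∧ c i' = c i then Nat.find h else k + n + 2

/-- Feasibility of a fractional solution of the RBM linear program. -/
def Feasible (k n : ℕ) (c : ℕ → ℕ) (x : ℕ → ℕ → ℝ) : Prop :=
  (∀ i j, ¬(1 ≤ i ∧ i ≤ n ∧ max i (k+1) ≤ j ∧ j ≤ k + n) → x i j = 0) ∧
  (∀ i, 1 ≤ i → i ≤ n → ∑ j ∈ Finset.Icc (max i (k+1)) (k+n), x i j = 1) ∧
  (∀ j, k+1 ≤ j → j ≤ k+n → ∑ i ∈ Finset.Icc 1 (min j n), x i j = 1) ∧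
  (∀ i, 1 ≤ i → i ≤ n → nxt k n c i ≤ n →
    ∀ j, nxt k n c i ≤ j → x (nxt k n c i) j - x i (j-1) ≥ 0) ∧
  (∀ i j, 0 ≤ x i j)

/-- The cost `z(x)` of a fractional solution. -/
noncomputable def cost (k n : ℕ) (c : ℕ → ℕ) (x : ℕ → ℕ → ℝ) : ℝ :=
  ∑ i ∈ Finset.Icc 1 n, ∑ j ∈ Finset.Icc (max i (k+1)) (nxt k n c i - 2), x i j

/-- The weight `w_i^j` of item `i` at time `j`. -/
def weight (k : ℕ) (x : ℕ → ℕ → ℝ) (i j : ℕ) : ℝ :=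
  1 - ∑ j' ∈ Finset.Icc (max i (k+1)) j, x i j'

section basics
variable {k n : ℕ} {c : ℕ → ℕ}

lemma nxt_spec {i : ℕ} (h : nxt k n c i ≤ n) :
    i < nxt k n c i ∧ nxt k n c i ≤ n ∧ c (nxt k n c i) = c i := by
  classical
  unfold nxt at h ⊢
  split_ifs at h ⊢ with hex
  · have := Nat.find_spec hex
    exact ⟨this.1.1, this.1.2, this.2⟩
  · omega

lemma nxt_le {i i' : ℕ} (h1 : i < i') (h2 : i' ≤ n) (h3 : c i' = c i) :
    nxt k n c i ≤ i' := by
  classical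
  unfold nxt
  have hex : ∃ j, (i < j ∧ j ≤ n) ∧ c j = c i := ⟨i', ⟨h1, h2⟩, h3⟩
  rw [dif_pos hex]
  exact Nat.find_le ⟨⟨h1, h2⟩, h3⟩

lemma nxt_min {i i' : ℕ} (h1 : i < i') (h2 : i' < nxt k n c i) (h3 : i' ≤ n) :
    c i' ≠ c i := by
  classical
  intro hc
  exact absurd (nxt_le (k:=k) h1 h3 hc) (by omega)

lemma nxt_gt (i : ℕ) (hi : i ≤ n) : i < nxt k n c i := by
  classical
  unfold nxt
  split_ifs with hex
  · exact (Nat.find_spec hex).1.1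
  · omega

lemma nxt_cases (i : ℕ) : nxt k n c i ≤ n ∨ nxt k n c i = k + n + 2 := by
  classical
  unfold nxt
  split_ifs with hex
  · exact Or.inl (Nat.find_spec hex).1.2
  · exact Or.inr rfl

end basics

/-- A valid schedule. -/
def Sched (k n : ℕ) (σ τ : ℕ → ℕ) : Prop :=
  (∀ i, 1 ≤ i → i ≤ n → (k+1 ≤ σ i ∧ σ i ≤ k+n) ∧ i ≤ σ i ∧ τ (σ i) = i) ∧
  (∀ j, k+1 ≤ j → j ≤ k+n → (1 ≤ τ j ∧ τ j ≤ n) ∧ σ (τ j) = j)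

/-- The "follow-up" property P. -/
def IsP (k n : ℕ) (c : ℕ → ℕ) (σ : ℕ → ℕ) : Prop :=
  ∀ i, 1 ≤ i → i ≤ n → nxt k n c i ≤ n → nxt k n c i ≤ σ i + 1 →
    σ (nxt k n c i) = σ i + 1

/-- Sorted within each color class. -/
def Srt (n : ℕ) (c σ : ℕ → ℕ) : Prop :=
  ∀ i i', 1 ≤ i → i < i' → i' ≤ n → c i = c i' → σ i < σ i'

/-- Number of color changes in the output. -/
def chg (k n : ℕ) (c τ : ℕ → ℕ) : ℕ :=
  ((Finset.Icc (k+1) (k+n-1)).filter (fun j => c (τ j) ≠ c (τ (j+1)))).card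

/-- The combinatorial cost of a schedule. -/
noncomputable def costS (k n : ℕ) (c σ : ℕ → ℕ) : ℕ :=
  ((Finset.Icc 1 n).filter (fun i => σ i ≤ nxt k n c i - 2)).card

section sched
variable {k n : ℕ} {c σ τ : ℕ → ℕ}

lemma Sched.inj (hs : Sched k n σ τ) {i i' : ℕ} (hi : 1 ≤ i) (hi2 : i ≤ n)
    (hi' : 1 ≤ i') (hi'2 : i' ≤ n) (h : σ i = σ i') : i = i' := by
  have h1 := (hs.1 i hi hi2).2.2
  have h2 := (hs.1 i' hi' hi'2).2.2
  rw [h] at h1; rw [h1] at h2; exact h2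

/-- key chain lemma for P-schedules -/
lemma chainC (hs : Sched k n σ τ) (hp : IsP k n c σ) {i : ℕ}
    (hi1 : 1 ≤ i) (hi2 : i ≤ n) :
    ∀ m, 1 ≤ m → m ≤ i → c m = c i → σ i + 1 ≤ σ m → False := by
  suffices h : ∀ d m, i - m ≤ d → 1 ≤ m → m ≤ i → c m = c i → σ i + 1 ≤ σ m → False by
    intro m; exact h (i - m) m le_rfl
  intro d
  induction d with
  | zero =>
    intro m hd h1 h2 h3 h4
    have hmi : m = i := by omega
    subst hmi; omega
  | succ d ih =>
    intro m hd h1 h2 h3 h4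
    rcases eq_or_lt_of_le h2 with rfl | hlt
    · omega
    · have hnle : nxt k n c m ≤ i := nxt_le (k:=k) hlt hi2 h3.symm
      have hm2 : m ≤ n := by omega
      have hσm : m ≤ σ m := (hs.1 m h1 hm2).2.1
      have hσi : i ≤ σ i := (hs.1 i hi1 hi2).2.1
      have hact : nxt k n c m ≤ σ m + 1 := by omega
      have hP := hp m h1 hm2 (by omega) hact
      have hg := nxt_gt (k:=k) (c:=c) m hm2
      exact ih (nxt k n c m) (by omega) (by omega) hnle
        (by rw [(nxt_spec (k:=k) (by omega : nxt k n c m ≤ n)).2.2, h3]) (by omega)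

end sched

section
variable {k n : ℕ} {c σ τ : ℕ → ℕ}

theorem costS_eq (hn : 1 ≤ n) (hs : Sched k n σ τ) (hp : IsP k n c σ) :
    costS k n c σ = 1 + chg k n c τ := by
  have hτn := hs.2 (k+n) (by omega) le_rfl
  set istar := τ (k+n) with histar
  have histar1 : 1 ≤ istar := hτn.1.1
  have histar2 : istar ≤ n := hτn.1.2
  have hσistar : σ istar = k + n := hτn.2
  -- i* is in S
  have histarS : istar ∈ (Finset.Icc 1 n).filter (fun i => σ i ≤ nxt k n c i - 2) := by
    rw [mem_filter, mem_Icc]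
    refine ⟨⟨histar1, histar2⟩, ?_⟩
    rcases nxt_cases (k:=k) (n:=n) (c:=c) istar with h | h
    · exfalso
      have := hp istar histar1 histar2 h (by omega)
      have := (hs.1 (nxt k n c istar) (by have := nxt_gt (k:=k) (c:=c) istar histar2; omega) h).1.2
      omega
    · omega
  -- key sublemma (β)
  have hbeta : ∀ i, 1 ≤ i → i ≤ n → σ i ≤ k+n-1 → σ i ≤ nxt k n c i - 2 →
      c (τ (σ i)) ≠ c (τ (σ i + 1)) := by
    intro i h1 h2 h3 h4 hcon
    have hτσ : τ (σ i) = i := (hs.1 i h1 h2).2.2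
    have hrange := (hs.1 i h1 h2).1
    have hj1 := hs.2 (σ i + 1) (by omega) (by omega)
    set i'' := τ (σ i + 1) with hi''
    have hσi'' : σ i'' = σ i + 1 := hj1.2
    rw [hτσ] at hcon
    have hne : i'' ≠ i := by intro h; rw [h] at hσi''; omega
    rcases lt_or_gt_of_ne hne with hlt | hgt
    · exact chainC hs hp h1 h2 i'' hj1.1.1 (by omega) hcon.symm (by omega)
    · have hnle : nxt k n c i ≤ i'' := nxt_le (k:=k) hgt hj1.1.2 hcon.symm
      have hgtn : i < nxt k n c i := nxt_gt (k:=k) (c:=c) i h2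
      have : i'' ≤ σ i'' := (hs.1 i'' hj1.1.1 hj1.1.2).2.1
      omega
  -- key sublemma (δ)
  have hdelta : ∀ j, j ∈ (Finset.Icc (k+1) (k+n-1)).filter
      (fun j => c (τ j) ≠ c (τ (j+1))) →
      (1 ≤ τ j ∧ τ j ≤ n) ∧ σ (τ j) = j ∧ σ (τ j) ≤ nxt k n c (τ j) - 2 := by
    intro j hj
    rw [mem_filter, mem_Icc] at hj
    have hjb := hs.2 j (by omega) (by omega)
    refine ⟨hjb.1, hjb.2, ?_⟩
    rcases nxt_cases (k:=k) (n:=n) (c:=c) (τ j) with h | h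
    · by_contra hcon
      have hgtn : τ j < nxt k n c (τ j) := nxt_gt (k:=k) (c:=c) _ hjb.1.2
      have hP := hp (τ j) hjb.1.1 hjb.1.2 h (by omega)
      have hτ2 := (hs.1 (nxt k n c (τ j)) (by omega) h).2.2
      rw [hP, hjb.2] at hτ2
      have := (nxt_spec (k:=k) h).2.2
      rw [← hτ2] at this
      exact hj.2 this.symm
    · have := (hs.1 (τ j) hjb.1.1 hjb.1.2).1.2
      omega
  -- the bijection
  have hcard : ((((Finset.Icc 1 n).filter (fun i => σ i ≤ nxt k n c i - 2))).erase istar).card = chg k n c τ := by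
    unfold chg
    apply Finset.card_bij (fun i _ => σ i)
    · intro a ha
      rw [mem_erase, mem_filter, mem_Icc] at ha
      have hσa : σ a ≠ k + n := by
        intro h
        have := (hs.1 a ha.2.1.1 ha.2.1.2).2.2
        rw [h, ← histar] at this
        exact ha.1 this.symm
      have hr := (hs.1 a ha.2.1.1 ha.2.1.2).1
      rw [mem_filter, mem_Icc]
      exact ⟨⟨hr.1, by omega⟩, hbeta a ha.2.1.1 ha.2.1.2 (by omega) ha.2.2⟩
    · intro a ha b hb hab
      rw [mem_erase, mem_filter, mem_Icc] at ha hb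
      exact hs.inj ha.2.1.1 ha.2.1.2 hb.2.1.1 hb.2.1.2 hab
    · intro j hj
      obtain ⟨h1, h2, h3⟩ := hdelta j hj
      refine ⟨τ j, ?_, h2⟩
      rw [mem_erase, mem_filter, mem_Icc]
      rw [mem_filter, mem_Icc] at hj
      refine ⟨?_, ⟨h1.1, h1.2⟩, h3⟩
      intro h
      rw [h] at h2
      omega
  unfold costS
  rw [← hcard, Finset.card_erase_of_mem histarS]
  have : 0 < ((Finset.Icc 1 n).filter (fun i => σ i ≤ nxt k n c i - 2)).card :=
    Finset.card_pos.mpr ⟨istar, histarS⟩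
  omega
end
section
variable {k n : ℕ} {c σ τ : ℕ → ℕ}

open scoped Classical in
noncomputable def xOf (n : ℕ) (σ : ℕ → ℕ) : ℕ → ℕ → ℝ :=
  fun i j => if 1 ≤ i ∧ i ≤ n ∧ σ i = j then 1 else 0

open scoped Classical in
theorem xOf_spec (hs : Sched k n σ τ) (hp : IsP k n c σ) :
    Feasible k n c (xOf n σ) ∧ (∀ i j, xOf n σ i j = 0 ∨ xOf n σ i j = 1) ∧
    cost k n c (xOf n σ) = (costS k n c σ : ℝ) := by
  have hx01 : ∀ i j, xOf n σ i j = 0 ∨ xOf n σ i j = 1 := by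
    intro i j; unfold xOf; split_ifs <;> simp
  refine ⟨⟨?_, ?_, ?_, ?_, ?_⟩, hx01, ?_⟩
  · -- support
    intro i j hcon
    unfold xOf
    rw [if_neg]
    rintro ⟨h1, h2, h3⟩
    have := (hs.1 i h1 h2).1
    have := (hs.1 i h1 h2).2.1
    have hmax : max i (k+1) ≤ σ i := by omega
    exact hcon ⟨h1, h2, by omega, by omega⟩
  · -- row sums
    intro i h1 h2
    have hr := (hs.1 i h1 h2).1
    have hr2 := (hs.1 i h1 h2).2.1
    have : ∀ j ∈ Finset.Icc (max i (k+1)) (k+n), xOf n σ i j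
        = if σ i = j then (1:ℝ) else 0 := by
      intro j hj
      unfold xOf
      by_cases h : σ i = j
      · rw [if_pos ⟨h1, h2, h⟩, if_pos h]
      · rw [if_neg (by tauto), if_neg h]
    rw [Finset.sum_congr rfl this, Finset.sum_ite_eq]
    rw [if_pos (by rw [mem_Icc]; omega)]
  · -- column sums
    intro j hj1 hj2
    have hc := hs.2 j hj1 hj2
    have : ∀ i ∈ Finset.Icc 1 (min j n), xOf n σ i j
        = if τ j = i then (1:ℝ) else 0 := by
      intro i hi
      rw [mem_Icc] at hi
      unfold xOf
      by_cases h : τ j = i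
      · rw [if_pos (by exact ⟨hi.1, by omega, by rw [← h, hc.2]⟩), if_pos h]
      · rw [if_neg, if_neg h]
        rintro ⟨g1, g2, g3⟩
        exact h (by rw [← g3, (hs.1 i g1 g2).2.2])
    rw [Finset.sum_congr rfl this, Finset.sum_ite_eq]
    rw [if_pos]
    rw [mem_Icc]
    have := (hs.1 (τ j) hc.1.1 hc.1.2).2.1
    omega
  · -- constraint (3)
    intro i h1 h2 h3 j hj
    have hnn : 1 ≤ nxt k n c i := by have := nxt_gt (k:=k) (c:=c) i h2; omega
    rcases hx01 i (j-1) with h | h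
    · rw [h]
      have := hx01 (nxt k n c i) j
      rcases this with h' | h' <;> rw [h'] <;> norm_num
    · unfold xOf at h
      split_ifs at h with hcond
      · obtain ⟨g1, g2, g3⟩ := hcond
        have hact : nxt k n c i ≤ σ i + 1 := by omega
        have hP := hp i h1 h2 h3 hact
        have : xOf n σ (nxt k n c i) j = 1 := by
          unfold xOf
          rw [if_pos ⟨hnn, h3, by omega⟩]
        rw [this]
        rcases hx01 i (j-1) with h' | h' <;> rw [h'] <;> norm_num
      · norm_num at h
  · intro i j
    unfold xOf; split_ifs <;> norm_num
  · -- cost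
    unfold cost costS
    rw [← Finset.sum_boole]
    apply Finset.sum_congr rfl
    intro i hi
    rw [mem_Icc] at hi
    have hr := (hs.1 i hi.1 hi.2).1
    have hr2 := (hs.1 i hi.1 hi.2).2.1
    have : ∀ j ∈ Finset.Icc (max i (k+1)) (nxt k n c i - 2), xOf n σ i j
        = if σ i = j then (1:ℝ) else 0 := by
      intro j hj
      unfold xOf
      by_cases h : σ i = j
      · rw [if_pos ⟨hi.1, hi.2, h⟩, if_pos h]
      · rw [if_neg (by tauto), if_neg h]
    rw [Finset.sum_congr rfl this, Finset.sum_ite_eq]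
    by_cases h : σ i ≤ nxt k n c i - 2
    · rw [if_pos (by rw [mem_Icc]; omega), if_pos h]
    · rw [if_neg (by rw [mem_Icc]; omega), if_neg h]
end
section
variable {k n : ℕ} {c : ℕ → ℕ} {x : ℕ → ℕ → ℝ}

lemma two_ones {s : Finset ℕ} {f : ℕ → ℝ} (h0 : ∀ a ∈ s, 0 ≤ f a) {a b : ℕ}
    (ha : a ∈ s) (hb : b ∈ s) (hab : a ≠ b) (hfa : f a = 1) (hfb : f b = 1)
    (hsum : ∑ y ∈ s, f y = 1) : False := by
  have hsub : {a, b} ⊆ s := by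
    intro y hy
    rcases Finset.mem_insert.mp hy with rfl | hy
    · exact ha
    · rw [Finset.mem_singleton] at hy; subst hy; exact hb
  have h2 : (2:ℝ) ≤ ∑ y ∈ s, f y := by
    calc (2:ℝ) = ∑ y ∈ ({a, b} : Finset ℕ), f y := by
          rw [Finset.sum_pair hab, hfa, hfb]; norm_num
    _ ≤ ∑ y ∈ s, f y :=
        Finset.sum_le_sum_of_subset_of_nonneg hsub (fun i hi _ => h0 i hi)
  linarith

open scoped Classical in
theorem extract (hf : Feasible k n c x) (h01 : ∀ i j, x i j = 0 ∨ x i j = 1) :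
    ∃ σ τ : ℕ → ℕ, Sched k n σ τ ∧ IsP k n c σ ∧
      cost k n c x = (costS k n c σ : ℝ) := by
  obtain ⟨hsupp, hrow, hcol, hcons, hpos⟩ := hf
  have hrex : ∀ i, 1 ≤ i → i ≤ n → ∃ j, (max i (k+1) ≤ j ∧ j ≤ k+n) ∧ x i j = 1 := by
    intro i h1 h2
    by_contra hcon
    push_neg at hcon
    have hz : ∑ j ∈ Finset.Icc (max i (k+1)) (k+n), x i j = 0 := by
      apply Finset.sum_eq_zero
      intro j hj; rw [mem_Icc] at hj
      rcases h01 i j with h | h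
      · exact h
      · exact absurd h (hcon j ⟨hj.1, hj.2⟩)
    rw [hrow i h1 h2] at hz; norm_num at hz
  have hcex : ∀ j, k+1 ≤ j → j ≤ k+n → ∃ i, (1 ≤ i ∧ i ≤ min j n) ∧ x i j = 1 := by
    intro j h1 h2
    by_contra hcon
    push_neg at hcon
    have hz : ∑ i ∈ Finset.Icc 1 (min j n), x i j = 0 := by
      apply Finset.sum_eq_zero
      intro i hi; rw [mem_Icc] at hi
      rcases h01 i j with h | h
      · exact h
      · exact absurd h (hcon i ⟨hi.1, hi.2⟩)
    rw [hcol j h1 h2] at hz; norm_num at hz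
  set σ : ℕ → ℕ := fun i =>
    if h : ∃ j, (max i (k+1) ≤ j ∧ j ≤ k+n) ∧ x i j = 1 then h.choose else 0 with hσdef
  set τ : ℕ → ℕ := fun j =>
    if h : ∃ i, (1 ≤ i ∧ i ≤ min j n) ∧ x i j = 1 then h.choose else 0 with hτdef
  have hσ : ∀ i, 1 ≤ i → i ≤ n → (max i (k+1) ≤ σ i ∧ σ i ≤ k+n) ∧ x i (σ i) = 1 := by
    intro i h1 h2
    have hex := hrex i h1 h2
    rw [hσdef]
    simp only [dif_pos hex]
    exact hex.choose_spec
  have hτ : ∀ j, k+1 ≤ j → j ≤ k+n → (1 ≤ τ j ∧ τ j ≤ min j n) ∧ x (τ j) j = 1 := by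
    intro j h1 h2
    have hex := hcex j h1 h2
    rw [hτdef]
    simp only [dif_pos hex]
    exact hex.choose_spec
  -- row uniqueness
  have hrowu : ∀ i, 1 ≤ i → i ≤ n → ∀ j, max i (k+1) ≤ j → j ≤ k+n → x i j = 1 →
      j = σ i := by
    intro i h1 h2 j hj1 hj2 hxj
    by_contra hne
    have hσi := hσ i h1 h2
    exact two_ones (f := fun j => x i j) (fun a _ => hpos i a)
      (Finset.mem_Icc.mpr ⟨hj1, hj2⟩) (Finset.mem_Icc.mpr ⟨hσi.1.1, hσi.1.2⟩)
      hne hxj hσi.2 (hrow i h1 h2)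
  -- column uniqueness
  have hcolu : ∀ j, k+1 ≤ j → j ≤ k+n → ∀ i, 1 ≤ i → i ≤ min j n → x i j = 1 →
      i = τ j := by
    intro j h1 h2 i hi1 hi2 hxj
    by_contra hne
    have hτj := hτ j h1 h2
    exact two_ones (f := fun i => x i j) (fun a _ => hpos a j)
      (Finset.mem_Icc.mpr ⟨hi1, hi2⟩) (Finset.mem_Icc.mpr ⟨hτj.1.1, hτj.1.2⟩)
      hne hxj hτj.2 (hcol j h1 h2)
  have hsched : Sched k n σ τ := by
    constructor
    · intro i h1 h2
      have hσi := hσ i h1 h2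
      refine ⟨⟨by omega, hσi.1.2⟩, by omega, ?_⟩
      exact (hcolu (σ i) (by omega) hσi.1.2 i h1 (by omega) hσi.2).symm
    · intro j h1 h2
      have hτj := hτ j h1 h2
      refine ⟨⟨hτj.1.1, by omega⟩, ?_⟩
      have h2' : τ j ≤ n := by omega
      exact (hrowu (τ j) hτj.1.1 h2' j (by omega) h2 hτj.2).symm
  have hisp : IsP k n c σ := by
    intro i h1 h2 h3 hact
    have hσi := hσ i h1 h2
    have hcge := hcons i h1 h2 h3 (σ i + 1) hact
    have hxi : x i (σ i + 1 - 1) = 1 := by simpa using hσi.2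
    rw [hxi] at hcge
    have hone : x (nxt k n c i) (σ i + 1) = 1 := by
      rcases h01 (nxt k n c i) (σ i + 1) with h | h
      · rw [h] at hcge; norm_num at hcge
      · exact h
    have hnn : 1 ≤ nxt k n c i := by have := nxt_gt (k:=k) (c:=c) i h2; omega
    -- support gives range
    have hrange : max (nxt k n c i) (k+1) ≤ σ i + 1 ∧ σ i + 1 ≤ k + n := by
      by_contra hcon
      have := hsupp (nxt k n c i) (σ i + 1) (by tauto)
      rw [hone] at this; norm_num at this
    exact (hrowu (nxt k n c i) hnn h3 (σ i + 1) hrange.1 hrange.2 hone).symm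
  refine ⟨σ, τ, hsched, hisp, ?_⟩
  unfold cost costS
  rw [← Finset.sum_boole]
  apply Finset.sum_congr rfl
  intro i hi
  rw [mem_Icc] at hi
  have hσi := hσ i hi.1 hi.2
  have hnle : nxt k n c i - 2 ≤ k + n := by
    rcases nxt_cases (k:=k) (n:=n) (c:=c) i with h | h <;> omega
  have hterm : ∀ j ∈ Finset.Icc (max i (k+1)) (nxt k n c i - 2), x i j
      = if σ i = j then (1:ℝ) else 0 := by
    intro j hj
    rw [mem_Icc] at hj
    by_cases h : σ i = j
    · rw [if_pos h, ← h, hσi.2]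
    · rw [if_neg h]
      rcases h01 i j with h' | h'
      · exact h'
      · exact absurd (hrowu i hi.1 hi.2 j hj.1 (by omega) h').symm h
  rw [Finset.sum_congr rfl hterm, Finset.sum_ite_eq]
  by_cases h : σ i ≤ nxt k n c i - 2
  · rw [if_pos (by rw [mem_Icc]; exact ⟨hσi.1.1, h⟩), if_pos h]
  · rw [if_neg (by rw [mem_Icc]; tauto), if_neg h]
end
section
variable {k n : ℕ} {c : ℕ → ℕ}

lemma chg_congr {τ τ' : ℕ → ℕ} (h : ∀ j, c (τ' j) = c (τ j)) :
    chg k n c τ' = chg k n c τ := by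
  unfold chg
  congr 1
  apply Finset.filter_congr
  intro j _
  rw [h j, h (j+1)]

lemma M_bound {σ τ : ℕ → ℕ} (hs : Sched k n σ τ) :
    ∑ i ∈ Finset.Icc 1 n, i * σ i ≤ n * (n * (k + n)) := by
  calc ∑ i ∈ Finset.Icc 1 n, i * σ i ≤ ∑ i ∈ Finset.Icc 1 n, n * (k+n) := by
        apply Finset.sum_le_sum
        intro i hi
        rw [mem_Icc] at hi
        exact Nat.mul_le_mul hi.2 (hs.1 i hi.1 hi.2).1.2
  _ = (Finset.Icc 1 n).card * (n * (k+n)) := by rw [Finset.sum_const, smul_eq_mul]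
  _ ≤ n * (n * (k+n)) := by
        apply Nat.mul_le_mul_right
        rw [Nat.card_Icc]; omega

theorem sortSched {σ τ : ℕ → ℕ} (hs : Sched k n σ τ) :
    ∃ σ' τ', Sched k n σ' τ' ∧ Srt n c σ' ∧ chg k n c τ' = chg k n c τ := by
  classical
  suffices h : ∀ d (σ τ : ℕ → ℕ), Sched k n σ τ →
      n * (n * (k+n)) + 1 - (∑ i ∈ Finset.Icc 1 n, i * σ i) ≤ d →
      ∃ σ' τ', Sched k n σ' τ' ∧ Srt n c σ' ∧ chg k n c τ' = chg k n c τ by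
    exact h (n * (n * (k+n)) + 1) σ τ hs (by omega)
  intro d
  induction d with
  | zero =>
    intro σ τ hs hd
    have := M_bound hs
    omega
  | succ d ih =>
    intro σ τ hs hd
    by_cases hsrt : Srt n c σ
    · exact ⟨σ, τ, hs, hsrt, rfl⟩
    · unfold Srt at hsrt
      push_neg at hsrt
      obtain ⟨i, i', h1, h2, h3, h4, h5⟩ := hsrt
      
      have hin : i ≤ n := by omega
      have hii : σ i' ≠ σ i := fun h => by
        have := hs.inj (by omega) h3 h1 hin h; omega
      have hlt : σ i' < σ i := by omega
      set σ2 : ℕ → ℕ := fun m => if m = i then σ i' else if m = i' then σ i else σ m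
        with hσ2
      set τ2 : ℕ → ℕ := fun j => if j = σ i then i' else if j = σ i' then i else τ j
        with hτ2
      have hri := (hs.1 i h1 hin)
      have hri' := (hs.1 i' (by omega) h3)
      have hne : i' ≠ i := by omega
      have e_i : σ2 i = σ i' := by rw [hσ2]; simp
      have e_i' : σ2 i' = σ i := by rw [hσ2]; simp [hne]
      have e_o : ∀ m, m ≠ i → m ≠ i' → σ2 m = σ m := by
        intro m g g'; rw [hσ2]; simp [g, g']
      have t_p : τ2 (σ i) = i' := by rw [hτ2]; simp
      have t_q : τ2 (σ i') = i := by rw [hτ2]; simp [hii]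
      have t_o : ∀ j, j ≠ σ i → j ≠ σ i' → τ2 j = τ j := by
        intro j g g'; rw [hτ2]; simp [g, g']
      have hs2 : Sched k n σ2 τ2 := by
        constructor
        · intro m hm1 hm2
          rcases eq_or_ne m i with rfl | hmi
          · rw [e_i, t_q]
            exact ⟨hri'.1, by omega, rfl⟩
          rcases eq_or_ne m i' with rfl | hmi'
          · rw [e_i', t_p]
            exact ⟨hri.1, by omega, rfl⟩
          · have hrm := hs.1 m hm1 hm2
            have g1 : σ m ≠ σ i := fun h => hmi (hs.inj hm1 hm2 h1 hin h)
            have g2 : σ m ≠ σ i' := fun h => hmi' (hs.inj hm1 hm2 (by omega) h3 h)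
            rw [e_o m hmi hmi', t_o _ g1 g2]
            exact hrm
        · intro j hj1 hj2
          rcases eq_or_ne j (σ i) with rfl | hji
          · rw [t_p, e_i']
            exact ⟨⟨by omega, h3⟩, rfl⟩
          rcases eq_or_ne j (σ i') with rfl | hji'
          · rw [t_q, e_i]
            exact ⟨⟨h1, hin⟩, rfl⟩
          · have hrj := hs.2 j hj1 hj2
            have g1 : τ j ≠ i := fun h => hji (by rw [← hrj.2, h])
            have g2 : τ j ≠ i' := fun h => hji' (by rw [← hrj.2, h])
            rw [t_o j hji hji', e_o _ g1 g2]
            exact hrj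
      have hcc : ∀ j, c (τ2 j) = c (τ j) := by
        intro j
        rcases eq_or_ne j (σ i) with rfl | hji
        · rw [t_p, hri.2.2, ← h4]
        rcases eq_or_ne j (σ i') with rfl | hji'
        · rw [t_q, hri'.2.2, h4]
        · rw [t_o j hji hji']
      have hM : ∑ m ∈ Finset.Icc 1 n, m * σ m + 1 ≤ ∑ m ∈ Finset.Icc 1 n, m * σ2 m := by
        have hiS : i ∈ Finset.Icc 1 n := by rw [mem_Icc]; omega
        have hi'S : i' ∈ (Finset.Icc 1 n).erase i := by
          rw [mem_erase, mem_Icc]; constructor <;> omega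
        rw [← Finset.add_sum_erase _ _ hiS, ← Finset.add_sum_erase _ _ hi'S,
          ← Finset.add_sum_erase _ (fun m => m * σ2 m) hiS,
          ← Finset.add_sum_erase _ (fun m => m * σ2 m) hi'S]
        have heq : ∀ m ∈ ((Finset.Icc 1 n).erase i).erase i', m * σ2 m = m * σ m := by
          intro m hm
          rw [mem_erase, mem_erase] at hm
          rw [e_o m hm.2.1 hm.1]
        rw [Finset.sum_congr rfl heq]
        simp only [e_i, e_i']
        nlinarith [h2, hlt]
      obtain ⟨σ', τ', a, b, ccc⟩ := ih σ2 τ2 hs2 (by omega)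
      exact ⟨σ', τ', a, b, by rw [ccc, chg_congr hcc]⟩
end
section
variable {k n : ℕ} {c : ℕ → ℕ}

def Viol (k n : ℕ) (c σ : ℕ → ℕ) (i : ℕ) : Prop :=
  1 ≤ i ∧ i ≤ n ∧ nxt k n c i ≤ σ i + 1 ∧ σ (nxt k n c i) ≠ σ i + 1

theorem fixStep {σ τ : ℕ → ℕ} (hs : Sched k n σ τ) (hsrt : Srt n c σ)
    {i₀ : ℕ} (hv : Viol k n c σ i₀) (hmin : ∀ i, Viol k n c σ i → σ i₀ ≤ σ i) :
    ∃ σ' τ' : ℕ → ℕ, Sched k n σ' τ' ∧ Srt n c σ' ∧ chg k n c τ' ≤ chg k n c τ ∧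
      ∀ i, Viol k n c σ' i → σ i₀ + 1 ≤ σ' i := by
  classical
  obtain ⟨h1, h2, hact, hnq⟩ := hv
  have hr0 := hs.1 i₀ h1 h2
  have hmn : nxt k n c i₀ ≤ n := by
    rcases nxt_cases (k:=k) (n:=n) (c:=c) i₀ with h | h
    · exact h
    · omega
  set p := σ i₀ with hp
  set m := nxt k n c i₀ with hm
  have him : i₀ < m := nxt_gt (k:=k) (c:=c) i₀ h2
  have hcm : c m = c i₀ := (nxt_spec (k:=k) hmn).2.2
  have hm1 : 1 ≤ m := by omega
  have hrm := hs.1 m hm1 hmn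
  set q := σ m with hq
  have hpq : p < q := hsrt i₀ m h1 him hmn hcm.symm
  have hq2 : p + 2 ≤ q := by
    rcases Nat.lt_or_ge (p+1) q with h | h
    · omega
    · exfalso; exact hnq (by omega)
  -- injectivity facts
  have injq : ∀ i, 1 ≤ i → i ≤ n → i ≠ m → σ i ≠ q := by
    intro i g1 g2 g3 g4
    exact g3 (hs.inj g1 g2 hm1 hmn g4)
  have injp : ∀ i, 1 ≤ i → i ≤ n → i ≠ i₀ → σ i ≠ p := by
    intro i g1 g2 g3 g4
    exact g3 (hs.inj g1 g2 h1 h2 g4)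
  set σ' : ℕ → ℕ := fun i => if i = m then p+1 else
    if p+1 ≤ σ i ∧ σ i ≤ q-1 then σ i + 1 else σ i with hσ'
  set τ' : ℕ → ℕ := fun j => if j = p+1 then m else
    if p+2 ≤ j ∧ j ≤ q then τ (j-1) else τ j with hτ'
  have e_m : σ' m = p + 1 := by rw [hσ']; simp
  have e_mid : ∀ i, i ≠ m → p+1 ≤ σ i → σ i ≤ q-1 → σ' i = σ i + 1 := by
    intro i g1 g2 g3; rw [hσ']; simp [g1, g2, g3]
  have e_out : ∀ i, i ≠ m → ¬(p+1 ≤ σ i ∧ σ i ≤ q-1) → σ' i = σ i := by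
    intro i g1 g2; rw [hσ']; simp only [g1, g2, if_false]
  have t_p1 : τ' (p+1) = m := by rw [hτ']; simp
  have t_mid : ∀ j, p+2 ≤ j → j ≤ q → τ' j = τ (j-1) := by
    intro j g1 g2; rw [hτ']; simp [g1, g2]; omega
  have t_out : ∀ j, j ≠ p+1 → ¬(p+2 ≤ j ∧ j ≤ q) → τ' j = τ j := by
    intro j g1 g2; rw [hτ']; simp [g1, g2]
  have hτp : τ p = i₀ := hr0.2.2
  have hτq : τ q = m := hrm.2.2
  -- Sched
  have hs' : Sched k n σ' τ' := by
    constructor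
    · intro i g1 g2
      rcases eq_or_ne i m with rfl | gim
      · rw [e_m, t_p1]
        exact ⟨⟨by omega, by omega⟩, by omega, rfl⟩
      · have hri := hs.1 i g1 g2
        by_cases gmid : p+1 ≤ σ i ∧ σ i ≤ q-1
        · rw [e_mid i gim gmid.1 gmid.2, t_mid (σ i + 1) (by omega) (by omega)]
          refine ⟨⟨by omega, by omega⟩, by omega, ?_⟩
          simp only [Nat.add_sub_cancel]
          exact hri.2.2
        · have hout : σ i ≤ p ∨ q + 1 ≤ σ i := by
            have := injq i g1 g2 gim
            omega
          rw [e_out i gim gmid, t_out (σ i) (by omega) (by omega)]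
          exact ⟨hri.1, hri.2.1, hri.2.2⟩
    · intro j g1 g2
      rcases eq_or_ne j (p+1) with rfl | gj1
      · rw [t_p1, e_m]
        exact ⟨⟨hm1, hmn⟩, rfl⟩
      by_cases gj2 : p+2 ≤ j ∧ j ≤ q
      · rw [t_mid j gj2.1 gj2.2]
        have hrj := hs.2 (j-1) (by omega) (by omega)
        have gneq : τ (j-1) ≠ m := by
          intro h
          rw [h] at hrj
          omega
        refine ⟨hrj.1, ?_⟩
        rw [e_mid (τ (j-1)) gneq (by omega) (by omega), hrj.2]
        omega
      · rw [t_out j gj1 gj2]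
        have hrj := hs.2 j g1 g2
        have gneq : τ j ≠ m := by
          intro h
          rw [h] at hrj
          omega
        refine ⟨hrj.1, ?_⟩
        rw [e_out (τ j) gneq (by omega), hrj.2]
  -- Srt
  have hsrt' : Srt n c σ' := by
    intro i i' g1 g2 g3 g4
    rcases eq_or_ne i m with rfl | gim
    · have : σ m < σ i' := hsrt m i' hm1 g2 g3 g4
      have gi'm : i' ≠ m := by omega
      rw [e_m, e_out i' gi'm (by omega)]
      omega
    rcases eq_or_ne i' m with rfl | gi'm
    · have hci : c i = c i₀ := by rw [g4, hcm]
      have hii₀ : i ≤ i₀ := by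
        by_contra hcon
        exact (nxt_min (k:=k) (by omega : i₀ < i) (by omega : i < nxt k n c i₀)
          (by omega)) hci
      have hile : σ i ≤ p := by
        rcases eq_or_lt_of_le hii₀ with rfl | hlt
        · omega
        · have := hsrt i i₀ g1 hlt h2 (by rw [hci])
          omega
      rw [e_m, e_out i gim (by omega)]
      omega
    · have hbase : σ i < σ i' := hsrt i i' g1 g2 g3 g4
      have g1' : 1 ≤ i' := by omega
      have gin : i ≤ n := by omega
      by_cases bi : p+1 ≤ σ i ∧ σ i ≤ q-1
      · by_cases bi' : p+1 ≤ σ i' ∧ σ i' ≤ q-1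
        · rw [e_mid i gim bi.1 bi.2, e_mid i' gi'm bi'.1 bi'.2]; omega
        · have := injq i' g1' g3 gi'm
          rw [e_mid i gim bi.1 bi.2, e_out i' gi'm bi']
          omega
      · by_cases bi' : p+1 ≤ σ i' ∧ σ i' ≤ q-1
        · rw [e_out i gim bi, e_mid i' gi'm bi'.1 bi'.2]; omega
        · rw [e_out i gim bi, e_out i' gi'm bi']; omega
  -- new violations are to the right
  have hviol' : ∀ i, Viol k n c σ' i → p + 1 ≤ σ' i := by
    intro i ⟨g1, g2, gact, gne⟩
    by_contra hcon
    push_neg at hcon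
    have gim : i ≠ m := by
      intro h; rw [h, e_m] at hcon; omega
    have gout : σ' i = σ i := by
      by_cases gmid : p+1 ≤ σ i ∧ σ i ≤ q-1
      · exfalso
        rw [e_mid i gim gmid.1 gmid.2] at hcon
        omega
      · exact e_out i gim gmid
    rw [gout] at hcon gact gne
    have hmn' : nxt k n c i ≤ n := by
      rcases nxt_cases (k:=k) (n:=n) (c:=c) i with h | h
      · exact h
      · omega
    rcases eq_or_ne i i₀ with rfl | gii₀
    · rw [← hm] at gne
      rw [e_m] at gne
      omega
    · have hilt : σ i < p := by
        have := injp i g1 g2 gii₀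
        omega
      have hnv : ¬ Viol k n c σ i := by
        intro hvv
        have := hmin i hvv
        omega
      unfold Viol at hnv
      push_neg at hnv
      have heq : σ (nxt k n c i) = σ i + 1 := hnv g1 g2 gact
      have gnem : nxt k n c i ≠ m := by
        intro h
        rw [h, ← hq] at heq
        omega
      rw [e_out (nxt k n c i) gnem (by omega), heq] at gne
      omega
  -- chg bound
  have hchg : chg k n c τ' ≤ chg k n c τ := by
    unfold chg
    rw [Finset.card_filter, Finset.card_filter]
    rw [Finset.Icc_add_one_left_eq_Ioc]
    set f : ℕ → ℕ := fun j => if c (τ j) ≠ c (τ (j+1)) then 1 else 0 with hf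
    set f' : ℕ → ℕ := fun j => if c (τ' j) ≠ c (τ' (j+1)) then 1 else 0 with hf'
    set b := k + n - 1 with hb
    have hkp : k ≤ p - 1 := by omega
    have hpb : p ≤ b := by omega
    have hq2b : q - 2 ≤ b := by omega
    -- termwise facts
    have F1 : ∀ j ∈ Finset.Ioc k (p-1), f' j = f j := by
      intro j hj
      rw [Finset.mem_Ioc] at hj
      rw [hf', hf]
      simp only
      rw [t_out j (by omega) (by omega), t_out (j+1) (by omega) (by omega)]
    have F2 : f' p = 0 := by
      rw [hf']
      simp only
      rw [t_out p (by omega) (by omega), t_p1, hτp, if_neg]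
      simp [hcm]
    have F3 : ∀ j ∈ Finset.Ioc p (q-1), f' j = f (j-1) := by
      intro j hj
      rw [Finset.mem_Ioc] at hj
      rcases eq_or_ne j (p+1) with rfl | hj1
      · rw [hf', hf]
        simp only [Nat.add_sub_cancel]
        rw [t_p1, t_mid (p+1+1) (by omega) (by omega)]
        simp only [Nat.add_sub_cancel]
        rw [hcm, hτp]
      · rw [hf', hf]
        simp only
        rw [t_mid j (by omega) (by omega), t_mid (j+1) (by omega) (by omega)]
        simp only [Nat.add_sub_cancel]
        rw [show j - 1 + 1 = j by omega]
    have F5 : ∀ j ∈ Finset.Ioc q b, f' j = f j := by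
      intro j hj
      rw [Finset.mem_Ioc] at hj
      rw [hf', hf]
      simp only
      rw [t_out j (by omega) (by omega), t_out (j+1) (by omega) (by omega)]
    -- reindex
    have hreindex : ∑ j ∈ Finset.Ioc p (q-1), f (j-1) = ∑ j ∈ Finset.Ioc (p-1) (q-2), f j := by
      apply Finset.sum_nbij' (fun j => j - 1) (fun j => j + 1)
      · intro a ha; rw [Finset.mem_Ioc] at ha ⊢; omega
      · intro a ha; rw [Finset.mem_Ioc] at ha ⊢; omega
      · intro a ha; rw [Finset.mem_Ioc] at ha; omega
      · intro a ha; rw [Finset.mem_Ioc] at ha; omega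
      · intro a ha; rfl
    -- decompositions
    have d1 : ∑ j ∈ Finset.Ioc k (p-1), f' j + ∑ j ∈ Finset.Ioc (p-1) b, f' j
        = ∑ j ∈ Finset.Ioc k b, f' j := Finset.sum_Ioc_consecutive _ hkp (by omega)
    have d2 : ∑ j ∈ Finset.Ioc (p-1) p, f' j + ∑ j ∈ Finset.Ioc p b, f' j
        = ∑ j ∈ Finset.Ioc (p-1) b, f' j := Finset.sum_Ioc_consecutive _ (by omega) hpb
    have d3 : ∑ j ∈ Finset.Ioc p (q-1), f' j + ∑ j ∈ Finset.Ioc (q-1) b, f' j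
        = ∑ j ∈ Finset.Ioc p b, f' j := Finset.sum_Ioc_consecutive _ (by omega) (by omega)
    have hIocpp : Finset.Ioc (p-1) p = {p} := by
      rw [show p = (p-1)+1 by omega]
      simp
    have e2 : ∑ j ∈ Finset.Ioc (p-1) p, f' j = 0 := by
      rw [hIocpp, Finset.sum_singleton]
      exact F2
    -- bound the tail
    have htail : ∑ j ∈ Finset.Ioc (q-1) b, f' j ≤ ∑ j ∈ Finset.Ioc (q-2) b, f j := by
      rcases Nat.lt_or_ge b (q-1+1) with hcase | hcase
      · -- q - 1 ≥ b, tail empty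
        rw [Finset.Ioc_eq_empty (by omega), Finset.sum_empty]
        exact Nat.zero_le _
      · have hqb : q ≤ b := by omega
        have s1 : ∑ j ∈ Finset.Ioc (q-1) q, f' j + ∑ j ∈ Finset.Ioc q b, f' j
            = ∑ j ∈ Finset.Ioc (q-1) b, f' j := Finset.sum_Ioc_consecutive _ (by omega) hqb
        have s2 : ∑ j ∈ Finset.Ioc (q-2) (q-1), f j + (∑ j ∈ Finset.Ioc (q-1) q, f j
            + ∑ j ∈ Finset.Ioc q b, f j) = ∑ j ∈ Finset.Ioc (q-2) b, f j := by
          rw [Finset.sum_Ioc_consecutive _ (by omega : q-1 ≤ q) hqb,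
            Finset.sum_Ioc_consecutive _ (by omega : q-2 ≤ q-1) (by omega)]
        have hIq : Finset.Ioc (q-1) q = {q} := by
          rw [show q = (q-1)+1 by omega]; simp
        have hIq1 : Finset.Ioc (q-2) (q-1) = {q-1} := by
          rw [show q-1 = (q-2)+1 by omega]; simp
        have hfq : f' q ≤ f (q-1) + f q := by
          rw [hf', hf]
          simp only
          rw [t_mid q (by omega) le_rfl, t_out (q+1) (by omega) (by omega),
            show q - 1 + 1 = q by omega]
          by_cases e1 : c (τ (q-1)) = c (τ q) <;> by_cases e2 : c (τ q) = c (τ (q+1))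
          · rw [if_neg (by rw [e1, e2]; simp)]
            omega
          all_goals
            split_ifs <;> omega
        have e5 : ∑ j ∈ Finset.Ioc q b, f' j = ∑ j ∈ Finset.Ioc q b, f j :=
          Finset.sum_congr rfl F5
        have t1 : ∑ j ∈ Finset.Ioc (q-1) q, f' j = f' q := by
          rw [hIq, Finset.sum_singleton]
        have t2 : ∑ j ∈ Finset.Ioc (q-1) q, f j = f q := by
          rw [hIq, Finset.sum_singleton]
        have t3 : ∑ j ∈ Finset.Ioc (q-2) (q-1), f j = f (q-1) := by
          rw [hIq1, Finset.sum_singleton]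
        omega
    calc ∑ j ∈ Finset.Ioc k b, f' j
        = ∑ j ∈ Finset.Ioc k (p-1), f' j + (∑ j ∈ Finset.Ioc (p-1) p, f' j
          + (∑ j ∈ Finset.Ioc p (q-1), f' j + ∑ j ∈ Finset.Ioc (q-1) b, f' j)) := by
          rw [d3, d2, d1]
      _ ≤ ∑ j ∈ Finset.Ioc k (p-1), f j + (0 + (∑ j ∈ Finset.Ioc (p-1) (q-2), f j
          + ∑ j ∈ Finset.Ioc (q-2) b, f j)) := by
          rw [Finset.sum_congr rfl F1, e2, Finset.sum_congr rfl F3, hreindex]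
          exact Nat.add_le_add_left (Nat.add_le_add_left (Nat.add_le_add_left htail _) _) _
      _ = ∑ j ∈ Finset.Ioc k b, f j := by
          rw [Nat.zero_add, Finset.sum_Ioc_consecutive _ (by omega : p-1 ≤ q-2) hq2b,
            Finset.sum_Ioc_consecutive _ hkp (by omega)]
  exact ⟨σ', τ', hs', hsrt', hchg, hviol'⟩
end

section
variable {k n : ℕ} {c : ℕ → ℕ}

theorem fixAll {σ τ : ℕ → ℕ} (hs : Sched k n σ τ) (hsrt : Srt n c σ) :
    ∃ σ' τ', Sched k n σ' τ' ∧ IsP k n c σ' ∧ chg k n c τ' ≤ chg k n c τ := by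
  classical
  suffices h : ∀ d (σ τ : ℕ → ℕ), Sched k n σ τ → Srt n c σ →
      (∀ i, Viol k n c σ i → k + n + 1 - σ i ≤ d) →
      ∃ σ' τ', Sched k n σ' τ' ∧ IsP k n c σ' ∧ chg k n c τ' ≤ chg k n c τ by
    apply h (k+n) σ τ hs hsrt
    intro i hv
    have := (hs.1 i hv.1 hv.2.1).1
    omega
  intro d
  induction d with
  | zero =>
    intro σ τ hs hsrt hbd
    refine ⟨σ, τ, hs, ?_, le_rfl⟩
    intro i g1 g2 g3 gact
    by_contra gne
    have := hbd i ⟨g1, g2, gact, gne⟩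
    have := (hs.1 i g1 g2).1.2
    omega
  | succ d ih =>
    intro σ τ hs hsrt hbd
    by_cases hallp : IsP k n c σ
    · exact ⟨σ, τ, hs, hallp, le_rfl⟩
    · have hex : ∃ i, Viol k n c σ i := by
        unfold IsP at hallp
        push_neg at hallp
        obtain ⟨i, g1, g2, g3, g4, g5⟩ := hallp
        exact ⟨i, g1, g2, g4, g5⟩
      obtain ⟨i₀, hv0⟩ := hex
      obtain ⟨i₁, hi₁mem, hi₁min⟩ := Finset.exists_min_image
        ((Finset.Icc 1 n).filter (fun i => Viol k n c σ i)) σ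
        ⟨i₀, by rw [mem_filter, mem_Icc]; exact ⟨⟨hv0.1, hv0.2.1⟩, hv0⟩⟩
      rw [mem_filter] at hi₁mem
      have hmin : ∀ i, Viol k n c σ i → σ i₁ ≤ σ i := by
        intro i hv
        exact hi₁min i (by rw [mem_filter, mem_Icc]; exact ⟨⟨hv.1, hv.2.1⟩, hv⟩)
      obtain ⟨σ', τ', hs', hsrt', hchg', hviol'⟩ := fixStep hs hsrt hi₁mem.2 hmin
      have hbd' : ∀ i, Viol k n c σ' i → k + n + 1 - σ' i ≤ d := by
        intro i hv
        have g1 := hviol' i hv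
        have g2 := hbd i₁ hi₁mem.2
        have g3 := (hs.1 i₁ hi₁mem.2.1 hi₁mem.2.2.1).1
        omega
      obtain ⟨σ'', τ'', a , b, cc⟩ := ih σ' τ' hs' hsrt' hbd'
      exact ⟨σ'', τ'', a, b, le_trans cc hchg'⟩
end


open scoped Classical in
theorem stmt0 (k n : ℕ) (hk : 1 ≤ k) (hn : 1 ≤ n) (c : ℕ → ℕ) :
    sInf {z : ℝ | ∃ x : ℕ → ℕ → ℝ, Feasible k n c x ∧
        (∀ i j, x i j = 0 ∨ x i j = 1) ∧ z = cost k n c x}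
    = sInf {z : ℝ | ∃ σ τ : ℕ → ℕ,
        (∀ i ∈ Finset.Icc 1 n, σ i ∈ Finset.Icc (k+1) (k+n) ∧ i ≤ σ i ∧ τ (σ i) = i) ∧
        (∀ j ∈ Finset.Icc (k+1) (k+n), τ j ∈ Finset.Icc 1 n ∧ σ (τ j) = j) ∧
        z = 1 + (((Finset.Icc (k+1) (k+n-1)).filter
              (fun j => c (τ j) ≠ c (τ (j+1)))).card : ℝ)} := by
  classical
  set A := {z : ℝ | ∃ x : ℕ → ℕ → ℝ, Feasible k n c x ∧
        (∀ i j, x i j = 0 ∨ x i j = 1) ∧ z = cost k n c x} with hA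
  set B := {z : ℝ | ∃ σ τ : ℕ → ℕ,
        (∀ i ∈ Finset.Icc 1 n, σ i ∈ Finset.Icc (k+1) (k+n) ∧ i ≤ σ i ∧ τ (σ i) = i) ∧
        (∀ j ∈ Finset.Icc (k+1) (k+n), τ j ∈ Finset.Icc 1 n ∧ σ (τ j) = j) ∧
        z = 1 + (((Finset.Icc (k+1) (k+n-1)).filter
              (fun j => c (τ j) ≠ c (τ (j+1)))).card : ℝ)} with hB
  have hmemB : ∀ z : ℝ, z ∈ B ↔ ∃ σ τ : ℕ → ℕ, Sched k n σ τ ∧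
      z = 1 + (chg k n c τ : ℝ) := by
    intro z
    constructor
    · rintro ⟨σ, τ, g1, g2, g3⟩
      refine ⟨σ, τ, ⟨?_, ?_⟩, g3⟩
      · intro i hi1 hi2
        have := g1 i (mem_Icc.mpr ⟨hi1, hi2⟩)
        rw [mem_Icc] at this
        exact this
      · intro j hj1 hj2
        have := g2 j (mem_Icc.mpr ⟨hj1, hj2⟩)
        rw [mem_Icc] at this
        exact this
    · rintro ⟨σ, τ, g1, g2⟩
      refine ⟨σ, τ, ?_, ?_, g2⟩
      · intro i hi
        rw [mem_Icc] at hi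
        have := g1.1 i hi.1 hi.2
        rw [mem_Icc]
        exact this
      · intro j hj
        rw [mem_Icc] at hj
        have := g1.2 j hj.1 hj.2
        rw [mem_Icc]
        exact this
  -- A ⊆ B
  have hAsub : A ⊆ B := by
    intro z hz
    obtain ⟨x, hf, h01, hzc⟩ := hz
    obtain ⟨σ, τ, hs, hp, hcost⟩ := extract hf h01
    rw [hmemB]
    refine ⟨σ, τ, hs, ?_⟩
    rw [hzc, hcost, costS_eq hn hs hp]
    push_cast
    ring
  -- every b ∈ B is dominated by some a ∈ A
  have hBdom : ∀ z ∈ B, ∃ z' ∈ A, z' ≤ z := by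
    intro z hz
    rw [hmemB] at hz
    obtain ⟨σ, τ, hs, hzc⟩ := hz
    obtain ⟨σ₁, τ₁, hs1, hsrt1, hchg1⟩ := sortSched (c:=c) hs
    obtain ⟨σ₂, τ₂, hs2, hp2, hchg2⟩ := fixAll hs1 hsrt1
    obtain ⟨hf2, h012, hc2⟩ := xOf_spec hs2 hp2
    refine ⟨cost k n c (xOf n σ₂), ⟨xOf n σ₂, hf2, h012, rfl⟩, ?_⟩
    rw [hc2, costS_eq hn hs2 hp2, hzc]
    push_cast
    have : chg k n c τ₂ ≤ chg k n c τ := by omega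
    have := (Nat.cast_le (α := ℝ)).mpr this
    linarith
  -- B nonempty
  have hBne : B.Nonempty := by
    refine ⟨1 + ((((Finset.Icc (k+1) (k+n-1)).filter
        (fun j => c ((fun j => j - k) j) ≠ c ((fun j => j - k) (j+1)))).card : ℕ) : ℝ),
      ?_⟩
    rw [hmemB]
    refine ⟨fun i => k + i, fun j => j - k, ⟨?_, ?_⟩, rfl⟩
    · intro i h1 h2
      show (k+1 ≤ k + i ∧ k + i ≤ k + n) ∧ i ≤ k + i ∧ k + i - k = i
      omega
    · intro j h1 h2
      show (1 ≤ j - k ∧ j - k ≤ n) ∧ k + (j - k) = j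
      omega
  have hBbdd : BddBelow B := by
    refine ⟨0, ?_⟩
    intro z hz
    rw [hmemB] at hz
    obtain ⟨σ, τ, _, hzc⟩ := hz
    rw [hzc]
    positivity
  have hAbdd : BddBelow A := hBbdd.mono hAsub
  have hAne : A.Nonempty := by
    obtain ⟨b, hb⟩ := hBne
    obtain ⟨a, ha, _⟩ := hBdom b hb
    exact ⟨a, ha⟩
  apply le_antisymm
  · apply le_csInf hBne
    intro b hb
    obtain ⟨a, haA, hab⟩ := hBdom b hb
    exact le_trans (csInf_le hAbdd haA) hab
  · apply le_csInf hAne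
    intro a ha
    exact csInf_le hBbdd (hAsub ha)
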